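/- arXiv:2204.13393 — 10 statements merged into one kernel-verified Lean document; each statement's English description precedes it below -/
import Mathlib

section
/- Let Q be an n×k real matrix with QᵀQ = I_k and let X be an n×s real matrix such that the horizontally concatenated n×(k+s) matrix [Q X] has full column rank k+s. Then there exist an n×s real matrix U with UᵀU = I_s and QᵀU = 0, a k×s real matrix P, and an invertible upper-triangular s×s real matrix N such that X = Q*P + U*N. -/
open Matrix

lemma pqr_aux_conj_posdef {m : Type*} [Fintype m] [DecidableEq m]
    (S B : Matrix m m ℝ) (hS : S.PosDef)
    (hB : IsUnit B) : (B * S * Bᵀ).PosDef := by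
  have hBt : Function.Injective Bᵀ.mulVec := by
    rw [mulVec_injective_iff_isUnit, isUnit_iff_isUnit_det, det_transpose,
      ← isUnit_iff_isUnit_det]
    exact hB
  refine Matrix.PosDef.of_dotProduct_mulVec_pos ?_ ?_
  · have h1 := hS.isHermitian
    unfold Matrix.IsHermitian at *
    rw [conjTranspose_mul, conjTranspose_mul]
    simp only [conjTranspose_eq_transpose_of_trivial, transpose_transpose] at *
    rw [h1, Matrix.mul_assoc]
  · intro x hx
    have hBx : Bᵀ *ᵥ x ≠ 0 := by
      intro h0
      apply hx
      apply hBt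
      simpa using h0
    have hpos := hS.dotProduct_mulVec_pos hBx
    have e : star x ⬝ᵥ (B * S * Bᵀ) *ᵥ x
        = star (Bᵀ *ᵥ x) ⬝ᵥ S *ᵥ (Bᵀ *ᵥ x) := by
      simp only [star_trivial]
      rw [← mulVec_mulVec, ← mulVec_mulVec, dotProduct_mulVec, ← mulVec_transpose]
    rw [e]; exact hpos

/-- Cholesky-type factorization `S = NᵀN` with `N` upper triangular and injective,
stated with instance-free conclusions. -/
lemma pqr_aux_chol {m : Type*} [Fintype m] [LinearOrder m] [WellFoundedLT m]
    [LocallyFiniteOrderBot m] (S : Matrix m m ℝ) (hS : S.PosDef) :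
    ∃ N : Matrix m m ℝ, (∀ i j : m, j < i → N i j = 0) ∧ Nᵀ * N = S ∧
      Function.Injective N.mulVec := by
  set L := LDL.lower hS with hL
  have hLDL : L * LDL.diag hS * Lᵀ = S := by
    have h := LDL.lower_conj_diag hS
    rw [conjTranspose_eq_transpose_of_trivial] at h
    rw [hL]
    exact h
  have hLunit : IsUnit L := by
    have hdet : L.det * ((LDL.diag hS).det * Lᵀ.det) = S.det := by
      rw [← det_mul, ← det_mul, ← Matrix.mul_assoc, hLDL]
    have hSu : IsUnit S.det := (isUnit_iff_isUnit_det _).mp hS.isUnit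
    rw [isUnit_iff_isUnit_det]
    exact isUnit_of_mul_isUnit_left (hdet ▸ hSu)
  have hLtri : ∀ i j : m, i < j → L i j = 0 := by
    haveI := LDL.invertibleLowerInv hS
    have h1 : BlockTriangular (LDL.lowerInv hS) OrderDual.toDual :=
      fun i j hij => LDL.lowerInv_triangular hS hij
    have h2 := blockTriangular_inv_of_blockTriangular h1
    intro i j hij
    exact h2 hij
  have hlowinvU : IsUnit (LDL.lowerInv hS) := by
    haveI := LDL.invertibleLowerInv hS
    exact isUnit_of_invertible _
  have hdiagpos : ∀ i, 0 < LDL.diagEntries hS i := by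
    have h3 := LDL.diag_eq_lowerInv_conj hS
    rw [show (LDL.lowerInv hS)ᴴ = (LDL.lowerInv hS)ᵀ from
      conjTranspose_eq_transpose_of_trivial _] at h3
    have h4 : (LDL.lowerInv hS * S * (LDL.lowerInv hS)ᵀ).PosDef :=
      pqr_aux_conj_posdef _ _ hS hlowinvU
    rw [← h3, LDL.diag] at h4
    exact Matrix.posDef_diagonal_iff.mp h4
  set d : m → ℝ := fun i => Real.sqrt (LDL.diagEntries hS i) with hd
  have hdpos : ∀ i, 0 < d i := fun i => Real.sqrt_pos.mpr (hdiagpos i)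
  refine ⟨diagonal d * Lᵀ, ?_, ?_, ?_⟩
  · intro i j hij
    rw [diagonal_mul, transpose_apply, hLtri j i hij, mul_zero]
  · rw [transpose_mul, transpose_transpose, diagonal_transpose]
    have hdd : diagonal d * diagonal d = LDL.diag hS := by
      have he : (fun i => d i * d i) = LDL.diagEntries hS :=
        funext fun i => Real.mul_self_sqrt (hdiagpos i).le
      rw [diagonal_mul_diagonal, he, LDL.diag]
    calc Lᵀᵀ * diagonal d * (diagonal d * Lᵀ)
        = L * (diagonal d * diagonal d) * Lᵀ := by
          rw [transpose_transpose]
          simp only [Matrix.mul_assoc]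
      _ = S := by rw [hdd, hLDL]
  · rw [mulVec_injective_iff_isUnit]
    have u1 : IsUnit (diagonal d) := by
      rw [Matrix.isUnit_iff_isUnit_det, det_diagonal]
      exact (Finset.prod_pos (fun i _ => hdpos i)).ne'.isUnit
    have u2 : IsUnit Lᵀ := by
      rw [Matrix.isUnit_iff_isUnit_det, det_transpose, ← Matrix.isUnit_iff_isUnit_det]
      exact hLunit
    exact u1.mul u2

lemma pqr_aux_inj {m ι : Type*} [Fintype m] [Fintype ι] [DecidableEq ι]
    (A : Matrix m ι ℝ) (h : A.rank = Fintype.card ι) :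
    Function.Injective A.mulVecLin := by
  rw [← LinearMap.ker_eq_bot]
  have h2 := LinearMap.finrank_range_add_finrank_ker A.mulVecLin
  rw [Matrix.rank] at h
  rw [Module.finrank_pi, h] at h2
  have : Module.finrank ℝ (LinearMap.ker A.mulVecLin) = 0 := by omega
  exact Submodule.finrank_eq_zero.mp this

lemma pqr_aux_gram_posdef {n s : ℕ} (Y : Matrix (Fin n) (Fin s) ℝ)
    (hY : Function.Injective Y.mulVecLin) : (Yᵀ * Y).PosDef := by
  refine Matrix.PosDef.of_dotProduct_mulVec_pos ?_ ?_
  · simpa using isHermitian_conjTranspose_mul_self Y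
  · intro x hx
    have hYx : Y *ᵥ x ≠ 0 := by
      intro h0
      apply hx
      have : Y.mulVecLin x = Y.mulVecLin 0 := by
        simp only [mulVecLin_apply, mulVec_zero]; exact h0
      exact hY this
    have e : star x ⬝ᵥ (Yᵀ * Y) *ᵥ x = (Y *ᵥ x) ⬝ᵥ (Y *ᵥ x) := by
      simp only [star_trivial]
      rw [← mulVec_mulVec, dotProduct_mulVec, ← mulVec_transpose, transpose_transpose]
    rw [e]
    have := dotProduct_self_star_pos_iff (R := ℝ) (v := Y *ᵥ x)
    simp only [star_trivial] at this
    exact this.mpr hYx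

/-- existence of the project-and-normalize (PQR) factorization
`X = Q*P + U*N` with `U` orthonormal, orthogonal to `Q`, and `N` invertible
upper triangular, provided `[Q X]` has full column rank. -/
theorem pqr_exists (n k s : ℕ)
    (Q : Matrix (Fin n) (Fin k) ℝ) (X : Matrix (Fin n) (Fin s) ℝ)
    (hQ : Qᵀ * Q = 1)
    (hrank : (Matrix.fromCols Q X).rank = k + s) :
    ∃ (U : Matrix (Fin n) (Fin s) ℝ) (P : Matrix (Fin k) (Fin s) ℝ)
      (N : Matrix (Fin s) (Fin s) ℝ),
      Uᵀ * U = 1 ∧ Qᵀ * U = 0 ∧ IsUnit N ∧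
      (∀ i j : Fin s, j < i → N i j = 0) ∧
      X = Q * P + U * N := by
  set P := Qᵀ * X with hP
  set Y := X - Q * P with hYdef
  have hQY : Qᵀ * Y = 0 := by
    rw [hYdef, Matrix.mul_sub, ← Matrix.mul_assoc, hQ, Matrix.one_mul, ← hP, sub_self]
  have hfull : Function.Injective (fromCols Q X).mulVecLin := by
    apply pqr_aux_inj
    rw [hrank]; simp [Fintype.card_sum]
  have hYinj : Function.Injective Y.mulVecLin := by
    rw [← LinearMap.ker_eq_bot, LinearMap.ker_eq_bot']
    intro v hv
    simp only [mulVecLin_apply] at hv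
    have h0 : (fromCols Q X).mulVecLin (Sum.elim (-(P *ᵥ v)) v)
        = (fromCols Q X).mulVecLin 0 := by
      simp only [mulVecLin_apply, fromCols_mulVec_sumElim, mulVec_zero, mulVec_neg,
        mulVec_mulVec]
      rw [hYdef, Matrix.sub_mulVec] at hv
      rw [neg_add_eq_sub]
      exact hv
    have h2 := hfull h0
    funext i
    simpa using congrFun h2 (Sum.inr i)
  have hS : (Yᵀ * Y).PosDef := pqr_aux_gram_posdef Y hYinj
  haveI : WellFoundedLT (Fin s) := inferInstance
  obtain ⟨N, hNtri, hNN, hNinj⟩ := pqr_aux_chol (Yᵀ * Y) hS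
  have hNunit : IsUnit N := mulVec_injective_iff_isUnit.mp hNinj
  have hNdet : IsUnit N.det := (Matrix.isUnit_iff_isUnit_det N).mp hNunit
  refine ⟨Y * N⁻¹, P, N, ?_, ?_, hNunit, hNtri, ?_⟩
  · have hNtdet : IsUnit Nᵀ.det := by rwa [det_transpose]
    rw [transpose_mul, Matrix.mul_assoc, ← Matrix.mul_assoc Yᵀ, ← hNN,
      transpose_nonsing_inv, Matrix.mul_assoc Nᵀ, Matrix.mul_nonsing_inv N hNdet,
      Matrix.mul_one, Matrix.nonsing_inv_mul Nᵀ hNtdet]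
  · rw [← Matrix.mul_assoc, hQY, Matrix.zero_mul]
  · rw [Matrix.mul_assoc, Matrix.nonsing_inv_mul N hNdet, Matrix.mul_one, hYdef]
    abel
end

section
/- Let Q be an n×k real matrix with QᵀQ = I_k, let X be an n×s real matrix, set P = Qᵀ*X, and let N be an invertible s×s real matrix with Nᵀ*N = Xᵀ*X − Pᵀ*P. Define U = (X − Q*P)*N⁻¹. Then Qᵀ*U = 0, Uᵀ*U = I_s, and X = Q*P + U*N. -/
open Matrix

/-- correctness of BCGS-PIP in exact arithmetic:
with `P = QᵀX`, `NᵀN = XᵀX − PᵀP` and `N` invertible,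
`U = (X − Q*P)*N⁻¹` satisfies `QᵀU = 0`, `UᵀU = I` and `X = Q*P + U*N`. -/
theorem bcgs_pip_correct (n k s : ℕ)
    (Q : Matrix (Fin n) (Fin k) ℝ) (X : Matrix (Fin n) (Fin s) ℝ)
    (hQ : Qᵀ * Q = 1) (P : Matrix (Fin k) (Fin s) ℝ) (hP : P = Qᵀ * X)
    (N : Matrix (Fin s) (Fin s) ℝ) (hNinv : IsUnit N)
    (hN : Nᵀ * N = Xᵀ * X - Pᵀ * P)
    (U : Matrix (Fin n) (Fin s) ℝ) (hU : U = (X - Q * P) * N⁻¹) :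
    Qᵀ * U = 0 ∧ Uᵀ * U = 1 ∧ X = Q * P + U * N := by
  have hdet : IsUnit N.det := (Matrix.isUnit_iff_isUnit_det N).mp hNinv
  have hinv : N⁻¹ * N = 1 := Matrix.nonsing_inv_mul N hdet
  have hinv' : N * N⁻¹ = 1 := Matrix.mul_nonsing_inv N hdet
  have hdetT : IsUnit Nᵀ.det := by rwa [Matrix.det_transpose]
  have hinvT : Nᵀ⁻¹ * Nᵀ = 1 := Matrix.nonsing_inv_mul Nᵀ hdetT
  have e1 : Qᵀ * (X - Q * P) = 0 := by
    rw [Matrix.mul_sub, ← Matrix.mul_assoc, hQ, Matrix.one_mul, hP, sub_self]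
  have hQU : Qᵀ * U = 0 := by
    rw [hU, ← Matrix.mul_assoc, e1, Matrix.zero_mul]
  have hXQ : Xᵀ * Q = Pᵀ := by
    rw [hP, Matrix.transpose_mul, Matrix.transpose_transpose]
  have hkey : (X - Q * P)ᵀ * (X - Q * P) = Nᵀ * N := by
    rw [Matrix.transpose_sub, Matrix.transpose_mul, Matrix.sub_mul,
      Matrix.mul_assoc Pᵀ Qᵀ, e1, Matrix.mul_zero, sub_zero,
      Matrix.mul_sub, ← Matrix.mul_assoc, hXQ, hN]
  refine ⟨hQU, ?_, ?_⟩
  · rw [hU, Matrix.transpose_mul, Matrix.transpose_nonsing_inv,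
      Matrix.mul_assoc, ← Matrix.mul_assoc (X - Q * P)ᵀ, hkey,
      ← Matrix.mul_assoc, Matrix.mul_assoc Nᵀ⁻¹, Matrix.mul_assoc Nᵀ,
      hinv', Matrix.mul_one, hinvT]
  · rw [hU, Matrix.mul_assoc, hinv, Matrix.mul_one, add_sub_cancel]
end

section
/- Let Q be an n×k real matrix with QᵀQ = I_k and let X be an n×s real matrix; set P = Qᵀ*X. Then the s×s matrix Xᵀ*X − Pᵀ*P is positive semidefinite, and it is positive definite if and only if the horizontally concatenated n×(k+s) matrix [Q X] has full column rank k+s. -/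
open Matrix

/-- with `P = QᵀX`, the matrix `XᵀX − PᵀP` is positive
semidefinite, and it is positive definite iff `[Q X]` has full column rank. -/
theorem bcgs_pip_posDef_iff_fullRank (n k s : ℕ)
    (Q : Matrix (Fin n) (Fin k) ℝ) (X : Matrix (Fin n) (Fin s) ℝ)
    (hQ : Qᵀ * Q = 1) (P : Matrix (Fin k) (Fin s) ℝ) (hP : P = Qᵀ * X) :
    (Xᵀ * X - Pᵀ * P).PosSemidef ∧
    ((Xᵀ * X - Pᵀ * P).PosDef ↔ (Matrix.fromCols Q X).rank = k + s) := by
  set Y : Matrix (Fin n) (Fin s) ℝ := X - Q * P with hY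
  have hXQ : Xᵀ * Q = Pᵀ := by rw [hP, transpose_mul, transpose_transpose]
  have hM : Xᵀ * X - Pᵀ * P = Yᵀ * Y := by
    rw [hY, transpose_sub, transpose_mul, Matrix.sub_mul, Matrix.mul_sub, Matrix.mul_sub]
    have e1 : Xᵀ * (Q * P) = Pᵀ * P := by rw [← Matrix.mul_assoc, hXQ]
    have e2 : Pᵀ * Qᵀ * X = Pᵀ * P := by rw [Matrix.mul_assoc, ← hP]
    have e3 : Pᵀ * Qᵀ * (Q * P) = Pᵀ * P := by
      rw [Matrix.mul_assoc, ← Matrix.mul_assoc Qᵀ, hQ, Matrix.one_mul]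
    rw [e1, e2, e3]; abel
  have hnn : ∀ z : Fin n → ℝ, 0 ≤ dotProduct z z := fun z =>
    Finset.sum_nonneg fun i _ => mul_self_nonneg _
  have hquad : ∀ x : Fin s → ℝ,
      dotProduct x ((Xᵀ * X - Pᵀ * P) *ᵥ x) = dotProduct (Y *ᵥ x) (Y *ᵥ x) := by
    intro x
    rw [hM, ← mulVec_mulVec, dotProduct_mulVec, vecMul_transpose]
  have hHerm : (Xᵀ * X - Pᵀ * P).IsHermitian := by
    rw [hM]
    unfold Matrix.IsHermitian
    rw [conjTranspose_eq_transpose_of_trivial, transpose_mul, transpose_transpose]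
  have hPSD : (Xᵀ * X - Pᵀ * P).PosSemidef := by
    refine PosSemidef.of_dotProduct_mulVec_nonneg hHerm fun x => ?_
    simpa [hquad x] using hnn (Y *ᵥ x)
  refine ⟨hPSD, ?_⟩
  have h1 : (Xᵀ * X - Pᵀ * P).PosDef ↔ ∀ v : Fin s → ℝ, Y *ᵥ v = 0 → v = 0 := by
    constructor
    · intro h v hv
      by_contra hv0
      have := h.dotProduct_mulVec_pos hv0
      rw [show star v = v from rfl, hquad v, hv, dotProduct_zero] at this
      exact lt_irrefl _ this
    · intro h
      refine PosDef.of_dotProduct_mulVec_pos hHerm fun v hv0 => ?_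
      rw [show star v = v from rfl, hquad v]
      have hYv : Y *ᵥ v ≠ 0 := fun hz => hv0 (h v hz)
      exact lt_of_le_of_ne (hnn _)
        (fun hc => hYv (dotProduct_self_eq_zero.mp hc.symm))
  set A := Matrix.fromCols Q X with hA
  have h2 : A.rank = k + s ↔ LinearMap.ker A.mulVecLin = ⊥ := by
    have hrn := LinearMap.finrank_range_add_finrank_ker A.mulVecLin
    have hdom : Module.finrank ℝ ((Fin k ⊕ Fin s) → ℝ) = k + s := by
      simp [Module.finrank_pi]
    rw [hdom] at hrn
    unfold Matrix.rank
    constructor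
    · intro h
      rw [h] at hrn
      have : Module.finrank ℝ (LinearMap.ker A.mulVecLin) = 0 := by omega
      exact Submodule.finrank_eq_zero.mp this
    · intro h
      rw [h] at hrn
      simpa using hrn
  have h3 : LinearMap.ker A.mulVecLin = ⊥ ↔ ∀ v : Fin s → ℝ, Y *ᵥ v = 0 → v = 0 := by
    rw [LinearMap.ker_eq_bot']
    constructor
    · intro h v hv
      have hv' : X *ᵥ v - Q *ᵥ (P *ᵥ v) = 0 := by
        rw [hY, sub_mulVec, ← mulVec_mulVec] at hv
        exact hv
      have key : A *ᵥ Sum.elim (-(P *ᵥ v)) v = 0 := by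
        rw [hA, fromCols_mulVec_sumElim, mulVec_neg, neg_add_eq_sub]
        exact hv'
      have := h (Sum.elim (-(P *ᵥ v)) v) key
      ext i
      exact congr_fun this (Sum.inr i)
    · intro h w hw
      have hw' : Q *ᵥ (w ∘ Sum.inl) + X *ᵥ (w ∘ Sum.inr) = 0 := by
        have : A *ᵥ Sum.elim (w ∘ Sum.inl) (w ∘ Sum.inr) = 0 := by
          rw [Sum.elim_comp_inl_inr]; exact hw
        rwa [hA, fromCols_mulVec_sumElim] at this
      set u := w ∘ Sum.inl with hu_def
      set v := w ∘ Sum.inr with hv_def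
      have hu : u + P *ᵥ v = 0 := by
        have := congr_arg (fun z => Qᵀ *ᵥ z) hw'
        simpa [mulVec_add, mulVec_mulVec, ← Matrix.mul_assoc, hQ, hP] using this
      have hu2 : u = -(P *ᵥ v) := eq_neg_of_add_eq_zero_left hu
      have hYv : Y *ᵥ v = 0 := by
        rw [hY, sub_mulVec, ← mulVec_mulVec, ← neg_neg (Q *ᵥ (P *ᵥ v)), ← mulVec_neg,
          ← hu2, sub_neg_eq_add, add_comm]
        exact hw'
      have hv0 : v = 0 := h v hYv
      have hu0 : u = 0 := by rw [hu2, hv0, mulVec_zero, neg_zero]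
      ext i
      cases i with
      | inl i => exact congr_fun hu0 i
      | inr i => exact congr_fun hv0 i
  rw [h1, h2, h3]
end

section
/- Let Q be an n×k real matrix and U an n×s real matrix with QᵀQ = I_k, Uᵀ*U = I_s and Qᵀ*U = 0, let P be a k×s real matrix and N an s×s real matrix, and suppose X = Q*P + U*N. Then the rank of the horizontally concatenated n×(k+s) matrix [Q X] equals k + rank N. -/
open Matrix

lemma aux_range_prodMap {R M M₂ M₃ M₄ : Type*} [CommRing R]
    [AddCommGroup M] [AddCommGroup M₂] [AddCommGroup M₃] [AddCommGroup M₄]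
    [Module R M] [Module R M₂] [Module R M₃] [Module R M₄]
    (f : M →ₗ[R] M₂) (g : M₃ →ₗ[R] M₄) :
    LinearMap.range (f.prodMap g) = (LinearMap.range f).prod (LinearMap.range g) := by
  ext ⟨x, y⟩
  simp only [LinearMap.mem_range, Submodule.mem_prod, LinearMap.prodMap_apply, Prod.ext_iff]
  constructor
  · rintro ⟨⟨a, b⟩, ha, hb⟩
    exact ⟨⟨a, ha⟩, ⟨b, hb⟩⟩
  · rintro ⟨⟨a, ha⟩, ⟨b, hb⟩⟩
    exact ⟨(a, b), ha, hb⟩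

lemma aux_finrank_prod {R M M' : Type*} [Field R]
    [AddCommGroup M] [AddCommGroup M'] [Module R M] [Module R M']
    (p : Submodule R M) (q : Submodule R M')
    [Module.Finite R p] [Module.Finite R q] :
    Module.finrank R (p.prod q) = Module.finrank R p + Module.finrank R q := by
  have hinj : Function.Injective (p.subtype.prodMap q.subtype) := by
    rintro ⟨a, b⟩ ⟨c, d⟩ h
    simp only [LinearMap.prodMap_apply, Prod.ext_iff, Submodule.coe_subtype] at h
    exact Prod.ext (Subtype.ext h.1) (Subtype.ext h.2)
  have hrange : LinearMap.range (p.subtype.prodMap q.subtype) = p.prod q := by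
    rw [aux_range_prodMap, Submodule.range_subtype, Submodule.range_subtype]
  have e := (LinearEquiv.ofInjective _ hinj).trans (LinearEquiv.ofEq _ _ hrange)
  rw [← e.finrank_eq, Module.finrank_prod]

lemma aux_rank_fromBlocks_diag {k s : ℕ}
    (A : Matrix (Fin k) (Fin k) ℝ) (D : Matrix (Fin s) (Fin s) ℝ) :
    (fromBlocks A 0 0 D).rank = A.rank + D.rank := by
  set e := LinearEquiv.sumArrowLequivProdArrow (Fin k) (Fin s) ℝ ℝ with he
  have key : (fromBlocks A 0 0 D).mulVecLin
      = e.symm.toLinearMap ∘ₗ (A.mulVecLin.prodMap D.mulVecLin) ∘ₗ e.toLinearMap := by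
    ext x i
    cases i with
    | inl i =>
      simp [he, LinearEquiv.sumArrowLequivProdArrow, mulVec, dotProduct,
        Fintype.sum_sum_type, fromBlocks]
    | inr j =>
      simp [he, LinearEquiv.sumArrowLequivProdArrow, mulVec, dotProduct,
        Fintype.sum_sum_type, fromBlocks]
  rw [Matrix.rank, key, LinearMap.range_comp, LinearMap.range_comp,
    LinearEquiv.range, Submodule.map_top, LinearEquiv.finrank_map_eq,
    aux_range_prodMap, aux_finrank_prod, Matrix.rank, Matrix.rank]

/-- if `X = Q*P + U*N` with `[Q U]` having jointly orthonormal
columns, then `rank [Q X] = k + rank N`. -/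
theorem rank_fromColumns_eq_add_rank (n k s : ℕ)
    (Q : Matrix (Fin n) (Fin k) ℝ) (U : Matrix (Fin n) (Fin s) ℝ)
    (hQ : Qᵀ * Q = 1) (hU : Uᵀ * U = 1) (hQU : Qᵀ * U = 0)
    (P : Matrix (Fin k) (Fin s) ℝ) (N : Matrix (Fin s) (Fin s) ℝ)
    (X : Matrix (Fin n) (Fin s) ℝ) (hX : X = Q * P + U * N) :
    (Matrix.fromCols Q X).rank = k + N.rank := by
  set W := fromCols Q U with hW
  set M : Matrix (Fin k ⊕ Fin s) (Fin k ⊕ Fin s) ℝ := fromBlocks 1 P 0 N with hM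
  have hWW : Wᵀ * W = 1 := by
    rw [hW, transpose_fromCols, fromRows_mul_fromCols, hQ, hQU]
    have hUQ : Uᵀ * Q = 0 := by
      have := congrArg transpose hQU
      simpa using this
    rw [hUQ, hU]
    ext (i | i) (j | j) <;> simp [fromBlocks, one_apply]
  have hQX : fromCols Q X = W * M := by
    rw [hW, hM, fromCols_mul_fromBlocks, hX]
    simp
  have hrankWM : (W * M).rank = M.rank := by
    refine le_antisymm (rank_mul_le_right _ _) ?_
    have : Wᵀ * (W * M) = M := by rw [← Matrix.mul_assoc, hWW, Matrix.one_mul]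
    calc M.rank = (Wᵀ * (W * M)).rank := by rw [this]
      _ ≤ (W * M).rank := rank_mul_le_right _ _
  have hMdec : M = fromBlocks 1 0 0 N * fromBlocks (1 : Matrix (Fin k) (Fin k) ℝ) P 0 1 := by
    rw [hM, fromBlocks_multiply]
    simp
  have hdet : IsUnit (fromBlocks (1 : Matrix (Fin k) (Fin k) ℝ) P 0 1).det := by
    rw [det_fromBlocks_zero₂₁]
    simp
  have hrankM : M.rank = k + N.rank := by
    rw [hMdec, rank_mul_eq_left_of_isUnit_det _ _ hdet, aux_rank_fromBlocks_diag, rank_one]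
    simp
  rw [hQX, hrankWM, hrankM]
end

section
/- Let u ∈ ℝᵐ be nonzero, let λ = ‖u‖₂, and let σ ∈ {−1, 1} be such that σ·u₀ ≤ 0, where u₀ is the first entry of u. Then w := u − σλe₀ is nonzero (e₀ the first standard basis vector), and the Householder reflector H = I − 2vvᵀ with v = w/‖w‖₂ satisfies H·u = σλe₀. -/
open Matrix

lemma euc_norm_sq (m : ℕ) (x : Fin m → ℝ) :
    ‖(WithLp.equiv 2 (Fin m → ℝ)).symm x‖ ^ 2 = x ⬝ᵥ x := by
  rw [EuclideanSpace.norm_eq, Real.sq_sqrt (by positivity)]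
  simp [dotProduct, sq_abs, sq]

/-- the Householder reflector step. For a nonzero `u ∈ ℝᵐ`,
`λ = ‖u‖₂`, and a sign `σ ∈ {−1,1}` with `σ·u₀ ≤ 0`, the vector
`w = u − σλe₀` is nonzero and the reflector `H = I − 2vvᵀ` with
`v = w/‖w‖₂` maps `u` to `σλe₀`. -/
theorem householder_reflector_step (m : ℕ) [NeZero m]
    (u : Fin m → ℝ) (hu : u ≠ 0)
    (σ : ℝ) (hσ : σ = -1 ∨ σ = 1)
    (hsign : σ * u 0 ≤ 0)
    (lam : ℝ) (hlam : lam = ‖(WithLp.equiv 2 (Fin m → ℝ)).symm u‖)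
    (w : Fin m → ℝ)
    (hw : w = u - (σ * lam) • (Pi.single (0 : Fin m) (1 : ℝ) : Fin m → ℝ))
    (v : Fin m → ℝ) (hv : v = ‖(WithLp.equiv 2 (Fin m → ℝ)).symm w‖⁻¹ • w)
    (H : Matrix (Fin m) (Fin m) ℝ)
    (hH : H = 1 - (2 : ℝ) • Matrix.vecMulVec v v) :
    w ≠ 0 ∧
    H.mulVec u = (σ * lam) • (Pi.single (0 : Fin m) (1 : ℝ) : Fin m → ℝ) := by
  have hlam_pos : 0 < lam := by
    rw [hlam]
    have : (WithLp.equiv 2 (Fin m → ℝ)).symm u ≠ 0 := by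
      simpa using hu
    exact norm_pos_iff.mpr this
  have hσ2 : σ ^ 2 = 1 := by rcases hσ with h | h <;> simp [h]
  have hlam2 : lam ^ 2 = u ⬝ᵥ u := by rw [hlam, euc_norm_sq]
  -- dot products with the basis vector
  have hsingle : ∀ x : Fin m → ℝ, x ⬝ᵥ (Pi.single (0 : Fin m) (1:ℝ)) = x 0 := by
    intro x; simp [dotProduct_single]
  have hwu : w ⬝ᵥ u = lam ^ 2 - σ * lam * u 0 := by
    rw [hw]
    simp [sub_dotProduct, smul_dotProduct, dotProduct_comm u, hsingle, hlam2]
  have hww : w ⬝ᵥ w = 2 * (lam ^ 2 - σ * lam * u 0) := by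
    rw [hw]
    simp only [sub_dotProduct, dotProduct_sub, smul_dotProduct, dotProduct_smul,
      smul_eq_mul]
    have h1 : (Pi.single (0 : Fin m) (1:ℝ)) ⬝ᵥ (Pi.single (0 : Fin m) (1:ℝ)) = 1 := by
      simp [dotProduct, Pi.single_apply]
    have h2 : (Pi.single (0 : Fin m) (1:ℝ)) ⬝ᵥ u = u 0 := by
      rw [dotProduct_comm]; exact hsingle u
    rw [h1, h2, hsingle u]
    linear_combination -hlam2 + lam ^ 2 * hσ2
  have hpos : 0 < lam ^ 2 - σ * lam * u 0 := by
    have : σ * lam * u 0 ≤ 0 := by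
      have := mul_nonpos_of_nonneg_of_nonpos (le_of_lt hlam_pos) hsign
      nlinarith
    nlinarith
  have hwwne : w ⬝ᵥ w ≠ 0 := by rw [hww]; positivity
  have hwne : w ≠ 0 := by
    intro h; apply hwwne; simp [h]
  refine ⟨hwne, ?_⟩
  have hnw2 : ‖(WithLp.equiv 2 (Fin m → ℝ)).symm w‖ ^ 2 = w ⬝ᵥ w := euc_norm_sq m w
  set nw := ‖(WithLp.equiv 2 (Fin m → ℝ)).symm w‖ with hnw
  have hkey : 2 * (nw⁻¹ * nw⁻¹) * (w ⬝ᵥ u) = 1 := by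
    have h2 : w ⬝ᵥ w = 2 * (w ⬝ᵥ u) := by rw [hww, hwu]
    have : nw⁻¹ * nw⁻¹ = (w ⬝ᵥ w)⁻¹ := by
      rw [← hnw2, sq, mul_inv]
    rw [this, h2]
    have hne : 2 * w ⬝ᵥ u ≠ 0 := by
      rw [hwu]; positivity
    field_simp
    exact div_self (by rw [hwu]; exact hpos.ne')
  funext i
  have hresult : u i - w i = (σ * lam) * (Pi.single (0 : Fin m) (1:ℝ) : Fin m → ℝ) i := by
    rw [hw]; simp
  rw [hH]
  simp only [Matrix.sub_mulVec, Matrix.one_mulVec, Matrix.smul_mulVec,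
    Pi.sub_apply, Pi.smul_apply, smul_eq_mul]
  have hvv : (Matrix.vecMulVec v v).mulVec u i = v i * (v ⬝ᵥ u) := by
    simp [Matrix.mulVec, Matrix.vecMulVec_apply, dotProduct, Finset.mul_sum, mul_assoc]
  rw [hvv, hv]
  simp only [Pi.smul_apply, smul_eq_mul, smul_dotProduct]
  have hfin : 2 * (nw⁻¹ * w i * (nw⁻¹ * (w ⬝ᵥ u))) = w i := by
    linear_combination w i * hkey
  rw [hfin]
  exact hresult
end

section
/- Let p ≥ 1, and for each i ∈ Fin p let Aᵢ be an nᵢ×s real matrix with Aᵢ = Qᵢ*Rᵢ, where Qᵢ is nᵢ×s with Qᵢᵀ*Qᵢ = I_s and Rᵢ is s×s. Let Sᵢ (s×s for each i) and R (s×s) satisfy Rᵢ = Sᵢ*R for every i and ∑_{i} Sᵢᵀ*Sᵢ = I_s. Then the matrix A with row blocks A₁,…,A_p satisfies A = Q*R, where Q is the matrix with row blocks Q₁*S₁,…,Q_p*S_p, and Qᵀ*Q = I_s. -/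
open Matrix

/-- correctness of one reduction step of the tree TSQR
algorithm: local factorizations `Aᵢ = Qᵢ*Rᵢ` together with a factorization
`Rᵢ = Sᵢ*R` of the stacked `R`-factors (with `∑ Sᵢᵀ*Sᵢ = I`) yield a global
QR factorization `A = Q*R` where `Q`, with row blocks `Qᵢ*Sᵢ`, has
orthonormal columns. -/
theorem tree_tsqr_reduction_correct (p s : ℕ) (hp : 1 ≤ p) (nrows : Fin p → ℕ)
    (A : ∀ i : Fin p, Matrix (Fin (nrows i)) (Fin s) ℝ)
    (Qb : ∀ i : Fin p, Matrix (Fin (nrows i)) (Fin s) ℝ)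
    (Rb S : Fin p → Matrix (Fin s) (Fin s) ℝ)
    (R : Matrix (Fin s) (Fin s) ℝ)
    (hfac : ∀ i, A i = Qb i * Rb i)
    (hQb : ∀ i, (Qb i)ᵀ * Qb i = 1)
    (hS : ∀ i, Rb i = S i * R)
    (hSortho : ∑ i : Fin p, (S i)ᵀ * S i = 1)
    (Astk Q : Matrix ((i : Fin p) × Fin (nrows i)) (Fin s) ℝ)
    (hAstk : ∀ (x : (i : Fin p) × Fin (nrows i)) (c : Fin s),
      Astk x c = A x.1 x.2 c)
    (hQ : ∀ (x : (i : Fin p) × Fin (nrows i)) (c : Fin s),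
      Q x c = (Qb x.1 * S x.1) x.2 c) :
    Astk = Q * R ∧ Qᵀ * Q = 1 := by
  constructor
  · ext x c
    rw [hAstk x c, hfac x.1, hS x.1, ← Matrix.mul_assoc]
    simp only [Matrix.mul_apply, hQ]
  · ext b c
    have key : ∀ i : Fin p, ∑ r : Fin (nrows i),
        (Qb i * S i) r b * (Qb i * S i) r c = ((S i)ᵀ * S i) b c := by
      intro i
      have : ((Qb i * S i)ᵀ * (Qb i * S i)) b c = ((S i)ᵀ * S i) b c := by
        rw [Matrix.transpose_mul, Matrix.mul_assoc, ← Matrix.mul_assoc (Qb i)ᵀ,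
          hQb i, Matrix.one_mul]
      simpa [Matrix.mul_apply, Matrix.transpose_apply, mul_comm] using this
    have h1 : (Qᵀ * Q) b c = ∑ i : Fin p, ((S i)ᵀ * S i) b c := by
      simp only [Matrix.mul_apply, Matrix.transpose_apply, hQ]
      rw [← Finset.univ_sigma_univ, Finset.sum_sigma]
      exact Finset.sum_congr rfl fun i _ => key i
    rw [h1, ← Matrix.sum_apply, hSortho]
end

section
/- Let p ≥ 1 and, for each i ∈ Fin p, let Qᵢ (nᵢ×k), Uᵢ (nᵢ×s), Rᵢ (k×k), Xᵢ (nᵢ×s), Pᵢ (k×s), Nᵢ (s×s), P̃ᵢ (k×s), Ñᵢ (s×s) be real matrices, and let P (k×s) and N (s×s) be real matrices, satisfying: (i) Qᵢᵀ*Qᵢ = I_k, Uᵢᵀ*Uᵢ = I_s, Qᵢᵀ*Uᵢ = 0 for each i; (ii) ∑_i Rᵢᵀ*Rᵢ = I_k; (iii) Xᵢ = Qᵢ*Pᵢ + Uᵢ*Nᵢ for each i (local solves); (iv) Pᵢ = Rᵢ*P + P̃ᵢ*N and Nᵢ = Ñᵢ*N for each i (reduction step); (v) ∑_i Rᵢᵀ*P̃ᵢ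 = 0 and ∑_i (P̃ᵢᵀ*P̃ᵢ + Ñᵢᵀ*Ñᵢ) = I_s. Let Q be the matrix with row blocks Qᵢ*Rᵢ, X the matrix with row blocks Xᵢ, and U the matrix with row blocks Qᵢ*P̃ᵢ + Uᵢ*Ñᵢ. Then X = Q*P + U*N, Qᵀ*U = 0, and Uᵀ*U = I_s. -/
open Matrix

lemma stacked_transpose_mul {p : ℕ} {nrows : Fin p → ℕ} {a b : Type*}
    [Fintype a] [Fintype b]
    (A : Matrix ((i : Fin p) × Fin (nrows i)) a ℝ)
    (B : Matrix ((i : Fin p) × Fin (nrows i)) b ℝ)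
    (Ab : ∀ i, Matrix (Fin (nrows i)) a ℝ)
    (Bb : ∀ i, Matrix (Fin (nrows i)) b ℝ)
    (hA : ∀ x c, A x c = Ab x.1 x.2 c) (hB : ∀ x c, B x c = Bb x.1 x.2 c) :
    Aᵀ * B = ∑ i, (Ab i)ᵀ * Bb i := by
  ext r c
  simp only [Matrix.mul_apply, Matrix.transpose_apply, Matrix.sum_apply]
  rw [← Finset.univ_sigma_univ, Finset.sum_sigma]
  exact Finset.sum_congr rfl fun i _ => Finset.sum_congr rfl fun j _ => by
    rw [hA ⟨i, j⟩ r, hB ⟨i, j⟩ c]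

lemma stacked_mul_right {p : ℕ} {nrows : Fin p → ℕ} {a b : Type*}
    [Fintype a] [Fintype b]
    (A : Matrix ((i : Fin p) × Fin (nrows i)) a ℝ)
    (Ab : ∀ i, Matrix (Fin (nrows i)) a ℝ) (M : Matrix a b ℝ)
    (hA : ∀ x c, A x c = Ab x.1 x.2 c) (x : (i : Fin p) × Fin (nrows i))
    (c : b) : (A * M) x c = (Ab x.1 * M) x.2 c := by
  simp only [Matrix.mul_apply, hA]

/-- main correctness theorem (in exact arithmetic) of the
TreeTSPQR algorithm: local project-and-normalize solves on each row block,
combined with a reduction step on the stacked coefficient matrices, solve the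
global project-and-normalize problem `X = Q*P + U*N`, `QᵀU = 0`, `UᵀU = I`. -/
theorem tree_tspqr_correct (p k s : ℕ) (hp : 1 ≤ p) (nrows : Fin p → ℕ)
    (Qb : ∀ i : Fin p, Matrix (Fin (nrows i)) (Fin k) ℝ)
    (Ub : ∀ i : Fin p, Matrix (Fin (nrows i)) (Fin s) ℝ)
    (Rb : Fin p → Matrix (Fin k) (Fin k) ℝ)
    (Xb : ∀ i : Fin p, Matrix (Fin (nrows i)) (Fin s) ℝ)
    (Pb : Fin p → Matrix (Fin k) (Fin s) ℝ)
    (Nb : Fin p → Matrix (Fin s) (Fin s) ℝ)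
    (Pt : Fin p → Matrix (Fin k) (Fin s) ℝ)
    (Nt : Fin p → Matrix (Fin s) (Fin s) ℝ)
    (P : Matrix (Fin k) (Fin s) ℝ) (N : Matrix (Fin s) (Fin s) ℝ)
    -- (i) local orthonormality
    (hQb : ∀ i, (Qb i)ᵀ * Qb i = 1)
    (hUb : ∀ i, (Ub i)ᵀ * Ub i = 1)
    (hQUb : ∀ i, (Qb i)ᵀ * Ub i = 0)
    -- (ii) orthonormality of the stacked R-factors
    (hRb : ∑ i : Fin p, (Rb i)ᵀ * Rb i = 1)
    -- (iii) local solves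
    (hloc : ∀ i, Xb i = Qb i * Pb i + Ub i * Nb i)
    -- (iv) reduction step
    (hPred : ∀ i, Pb i = Rb i * P + Pt i * N)
    (hNred : ∀ i, Nb i = Nt i * N)
    -- (v) orthonormality of the reduced factor
    (hred1 : ∑ i : Fin p, (Rb i)ᵀ * Pt i = 0)
    (hred2 : ∑ i : Fin p, ((Pt i)ᵀ * Pt i + (Nt i)ᵀ * Nt i) = 1)
    -- the stacked matrices
    (Q : Matrix ((i : Fin p) × Fin (nrows i)) (Fin k) ℝ)
    (X U : Matrix ((i : Fin p) × Fin (nrows i)) (Fin s) ℝ)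
    (hQ : ∀ (x : (i : Fin p) × Fin (nrows i)) (c : Fin k),
      Q x c = (Qb x.1 * Rb x.1) x.2 c)
    (hX : ∀ (x : (i : Fin p) × Fin (nrows i)) (c : Fin s),
      X x c = Xb x.1 x.2 c)
    (hU : ∀ (x : (i : Fin p) × Fin (nrows i)) (c : Fin s),
      U x c = (Qb x.1 * Pt x.1 + Ub x.1 * Nt x.1) x.2 c) :
    X = Q * P + U * N ∧ Qᵀ * U = 0 ∧ Uᵀ * U = 1 := by
  refine ⟨?_, ?_, ?_⟩
  · ext x c
    rw [hX, Matrix.add_apply, stacked_mul_right Q (fun i => Qb i * Rb i) P hQ,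
      stacked_mul_right U (fun i => Qb i * Pt i + Ub i * Nt i) N hU, hloc, hPred, hNred]
    simp only [Matrix.mul_add, Matrix.add_mul, Matrix.mul_assoc,
      Matrix.add_apply]
    ring
  · rw [stacked_transpose_mul Q U (fun i => Qb i * Rb i)
      (fun i => Qb i * Pt i + Ub i * Nt i) hQ hU]
    calc ∑ i, (Qb i * Rb i)ᵀ * (Qb i * Pt i + Ub i * Nt i)
        = ∑ i, (Rb i)ᵀ * Pt i := by
          refine Finset.sum_congr rfl fun i _ => ?_
          simp only [Matrix.transpose_mul, Matrix.mul_add, Matrix.mul_assoc]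
          rw [← Matrix.mul_assoc (Qb i)ᵀ (Qb i), ← Matrix.mul_assoc (Qb i)ᵀ (Ub i),
            hQb i, hQUb i]
          simp [Matrix.mul_assoc]
      _ = 0 := hred1
  · rw [stacked_transpose_mul U U (fun i => Qb i * Pt i + Ub i * Nt i)
      (fun i => Qb i * Pt i + Ub i * Nt i) hU hU]
    calc ∑ i, (Qb i * Pt i + Ub i * Nt i)ᵀ * (Qb i * Pt i + Ub i * Nt i)
        = ∑ i, ((Pt i)ᵀ * Pt i + (Nt i)ᵀ * Nt i) := by
          refine Finset.sum_congr rfl fun i _ => ?_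
          simp only [Matrix.transpose_add, Matrix.transpose_mul, Matrix.mul_add,
            Matrix.add_mul, Matrix.mul_assoc]
          rw [← Matrix.mul_assoc (Qb i)ᵀ (Qb i), ← Matrix.mul_assoc (Qb i)ᵀ (Ub i),
            ← Matrix.mul_assoc (Ub i)ᵀ (Qb i), ← Matrix.mul_assoc (Ub i)ᵀ (Ub i),
            hQb i, hQUb i, hUb i]
          have : (Ub i)ᵀ * Qb i = 0 := by
            have := congrArg Matrix.transpose (hQUb i)
            simpa using this
          rw [this]
          simp [Matrix.mul_assoc]
      _ = 1 := hred2
end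

section
/- Let p ≥ 1 and for each i ∈ Fin p let Rᵢ, P̃ᵢ, Ñᵢ be real matrices of sizes k×k, k×s and s×s respectively, with ∑_i Rᵢᵀ*Rᵢ = I_k. Then the vertically stacked matrix whose i-th row block is the 2×2 block matrix [Rᵢ P̃ᵢ; 0 Ñᵢ] has orthonormal columns (its Gram matrix is I_{k+s}) if and only if ∑_i Rᵢᵀ*P̃ᵢ = 0 and ∑_i (P̃ᵢᵀ*P̃ᵢ + Ñᵢᵀ*Ñᵢ) = I_s. -/
open Matrix

/-- characterization of orthonormality of the reduced factor of
the TreeTSPQR reduction step: assuming `∑ Rᵢᵀ*Rᵢ = I`, the vertically stacked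
matrix with row blocks `[Rᵢ P̃ᵢ; 0 Ñᵢ]` has orthonormal columns iff
`∑ Rᵢᵀ*P̃ᵢ = 0` and `∑ (P̃ᵢᵀ*P̃ᵢ + Ñᵢᵀ*Ñᵢ) = I`. -/
theorem tree_tspqr_reduced_orthonormal_iff (p k s : ℕ) (hp : 1 ≤ p)
    (Rb : Fin p → Matrix (Fin k) (Fin k) ℝ)
    (Pt : Fin p → Matrix (Fin k) (Fin s) ℝ)
    (Nt : Fin p → Matrix (Fin s) (Fin s) ℝ)
    (hRb : ∑ i : Fin p, (Rb i)ᵀ * Rb i = 1)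
    (M : Matrix ((_ : Fin p) × (Fin k ⊕ Fin s)) (Fin k ⊕ Fin s) ℝ)
    (hM : ∀ (x : (_ : Fin p) × (Fin k ⊕ Fin s)) (c : Fin k ⊕ Fin s),
      M x c = Matrix.fromBlocks (Rb x.1) (Pt x.1) 0 (Nt x.1) x.2 c) :
    Mᵀ * M = 1 ↔
      (∑ i : Fin p, (Rb i)ᵀ * Pt i = 0 ∧
       ∑ i : Fin p, ((Pt i)ᵀ * Pt i + (Nt i)ᵀ * Nt i) = 1) := by
  have key : Mᵀ * M = Matrix.fromBlocks
      (∑ i : Fin p, (Rb i)ᵀ * Rb i)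
      (∑ i : Fin p, (Rb i)ᵀ * Pt i)
      (∑ i : Fin p, (Rb i)ᵀ * Pt i)ᵀ
      (∑ i : Fin p, ((Pt i)ᵀ * Pt i + (Nt i)ᵀ * Nt i)) := by
    have h : Mᵀ * M = ∑ i : Fin p,
        (Matrix.fromBlocks (Rb i) (Pt i) 0 (Nt i))ᵀ *
          (Matrix.fromBlocks (Rb i) (Pt i) 0 (Nt i)) := by
      ext a c
      rw [Matrix.sum_apply]
      simp only [Matrix.mul_apply, Matrix.transpose_apply, hM]
      rw [← Finset.univ_sigma_univ, Finset.sum_sigma]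
    rw [h]
    have : ∀ i : Fin p,
        (Matrix.fromBlocks (Rb i) (Pt i) 0 (Nt i))ᵀ *
          (Matrix.fromBlocks (Rb i) (Pt i) 0 (Nt i)) =
        Matrix.fromBlocks ((Rb i)ᵀ * Rb i) ((Rb i)ᵀ * Pt i)
          ((Rb i)ᵀ * Pt i)ᵀ ((Pt i)ᵀ * Pt i + (Nt i)ᵀ * Nt i) := by
      intro i
      rw [Matrix.fromBlocks_transpose, Matrix.fromBlocks_multiply]
      simp [Matrix.transpose_mul]
    simp_rw [this]
    ext a c
    rcases a with a | a <;> rcases c with c | c <;>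
      simp [Matrix.sum_apply, Matrix.mul_apply, Matrix.transpose_apply, mul_comm] <;>
      rw [Finset.sum_comm]
  rw [key, hRb]
  have h1 : (1 : Matrix (Fin k ⊕ Fin s) (Fin k ⊕ Fin s) ℝ) =
      Matrix.fromBlocks 1 0 0 1 := by
    rw [Matrix.fromBlocks_one]
  rw [h1, Matrix.fromBlocks_inj]
  constructor
  · rintro ⟨-, h2, -, h4⟩; exact ⟨h2, h4⟩
  · rintro ⟨h2, h4⟩
    refine ⟨rfl, h2, ?_, h4⟩
    rw [h2]; simp
end

section
/- Let A₁ be an n₁×s real matrix with A₁ = Q₁*R₁, where Q₁ᵀ*Q₁ = I_s and R₁ is s×s, and let A₂ be an n₂×s real matrix. Suppose the vertically stacked (s+n₂)×s matrix [R₁; A₂] factors as Q₂*R with Q₂ᵀ*Q₂ = I_s, and write Q₂ = [T; B] with top block T of size s×s and bottom block B of size n₂×s. Then the stacked matrix A = [A₁; A₂] satisfies A = Q̂*R, where Q̂ = [Q₁*T; B], and Q̂ᵀ*Q̂ = I_s. -/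
open Matrix

/-- correctness of one step of the flat (sequential) TSQR
recursion: if `A₁ = Q₁*R₁` with `Q₁` orthonormal and `[R₁; A₂] = Q₂*R` with
`Q₂ = [T; B]` orthonormal, then `[A₁; A₂] = [Q₁*T; B] * R` and `[Q₁*T; B]`
has orthonormal columns. -/
theorem flat_tsqr_step_correct (n₁ n₂ s : ℕ)
    (A₁ : Matrix (Fin n₁) (Fin s) ℝ) (A₂ : Matrix (Fin n₂) (Fin s) ℝ)
    (Q₁ : Matrix (Fin n₁) (Fin s) ℝ) (R₁ : Matrix (Fin s) (Fin s) ℝ)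
    (hA₁ : A₁ = Q₁ * R₁) (hQ₁ : Q₁ᵀ * Q₁ = 1)
    (Q₂ : Matrix (Fin s ⊕ Fin n₂) (Fin s) ℝ) (R : Matrix (Fin s) (Fin s) ℝ)
    (hQ₂fac : Matrix.fromRows R₁ A₂ = Q₂ * R) (hQ₂ : Q₂ᵀ * Q₂ = 1)
    (T : Matrix (Fin s) (Fin s) ℝ) (B : Matrix (Fin n₂) (Fin s) ℝ)
    (hTB : Q₂ = Matrix.fromRows T B) :
    Matrix.fromRows A₁ A₂ = Matrix.fromRows (Q₁ * T) B * R ∧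
    (Matrix.fromRows (Q₁ * T) B)ᵀ * Matrix.fromRows (Q₁ * T) B = 1 := by
  subst hTB
  rw [fromRows_mul, fromRows_inj.eq_iff] at hQ₂fac
  obtain ⟨hR₁, hA₂⟩ := hQ₂fac
  rw [transpose_fromRows, fromCols_mul_fromRows] at hQ₂ ⊢
  constructor
  · rw [fromRows_mul, fromRows_inj.eq_iff]
    exact ⟨by rw [hA₁, hR₁, Matrix.mul_assoc], hA₂⟩
  · rw [Matrix.transpose_mul, Matrix.mul_assoc, ← Matrix.mul_assoc Q₁ᵀ, hQ₁,
      Matrix.one_mul, hQ₂]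
end

section
/- Let Q be an n×k real matrix with QᵀQ = I_k and let X be an n×s real matrix; set P = Qᵀ*X. Then rank(Xᵀ*X − Pᵀ*P) = rank([Q X]) − k, where [Q X] is the horizontally concatenated n×(k+s) matrix. -/
open Matrix

lemma range_fromColumns_mulVecLin {m k s : ℕ}
    (A : Matrix (Fin m) (Fin k) ℝ) (B : Matrix (Fin m) (Fin s) ℝ) :
    LinearMap.range (Matrix.fromCols A B).mulVecLin =
      LinearMap.range A.mulVecLin ⊔ LinearMap.range B.mulVecLin := by
  apply le_antisymm
  · rintro x ⟨v, rfl⟩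
    have hv : v = Sum.elim (v ∘ Sum.inl) (v ∘ Sum.inr) := by
      funext i; cases i <;> rfl
    rw [Matrix.mulVecLin_apply, hv, Matrix.fromCols_mulVec_sumElim]
    exact Submodule.add_mem_sup ⟨v ∘ Sum.inl, rfl⟩ ⟨v ∘ Sum.inr, rfl⟩
  · rw [sup_le_iff]
    constructor
    · rintro x ⟨v, rfl⟩
      refine ⟨Sum.elim v 0, ?_⟩
      rw [Matrix.mulVecLin_apply, Matrix.fromCols_mulVec_sumElim,
        Matrix.mulVec_zero, add_zero, Matrix.mulVecLin_apply]
    · rintro x ⟨v, rfl⟩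
      refine ⟨Sum.elim 0 v, ?_⟩
      rw [Matrix.mulVecLin_apply, Matrix.fromCols_mulVec_sumElim,
        Matrix.mulVec_zero, zero_add, Matrix.mulVecLin_apply]

lemma rank_fromColumns_orthogonal {m k s : ℕ}
    (A : Matrix (Fin m) (Fin k) ℝ) (B : Matrix (Fin m) (Fin s) ℝ)
    (hA : Aᵀ * A = 1) (hAB : Aᵀ * B = 0) :
    (Matrix.fromCols A B).rank = k + B.rank := by
  have hrankA : A.rank = k := by
    have := Matrix.rank_transpose_mul_self A
    rw [hA, Matrix.rank_one] at this
    simpa using this.symm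
  have hinf : LinearMap.range A.mulVecLin ⊓ LinearMap.range B.mulVecLin = ⊥ := by
    rw [Submodule.eq_bot_iff]
    rintro x ⟨⟨v, rfl⟩, ⟨w, hw⟩⟩
    have h2 : (0 : Fin k → ℝ) = v := by
      have := congrArg (Aᵀ.mulVec) hw
      simp only [Matrix.mulVecLin_apply, Matrix.mulVec_mulVec, hA, hAB,
        Matrix.one_mulVec, Matrix.zero_mulVec] at this
      exact this
    simp [← h2]
  have hsum := Submodule.finrank_sup_add_finrank_inf_eq
    (LinearMap.range A.mulVecLin) (LinearMap.range B.mulVecLin)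
  rw [hinf, finrank_bot, add_zero] at hsum
  rw [Matrix.rank, range_fromColumns_mulVecLin, hsum]
  show A.rank + B.rank = k + B.rank
  rw [hrankA]

/-- the rank of `XᵀX − PᵀP` (with `P = QᵀX`) equals
`rank [Q X] − k`: the rank-revealing square root in the deflation step of
BCGS-PIP detects exactly the linear dependencies of `[Q X]` beyond `Q`. -/
theorem deflation_rank (n k s : ℕ)
    (Q : Matrix (Fin n) (Fin k) ℝ) (X : Matrix (Fin n) (Fin s) ℝ)
    (hQ : Qᵀ * Q = 1) (P : Matrix (Fin k) (Fin s) ℝ) (hP : P = Qᵀ * X) :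
    (Xᵀ * X - Pᵀ * P).rank = (Matrix.fromCols Q X).rank - k := by
  set M : Matrix (Fin n) (Fin n) ℝ := 1 - Q * Qᵀ with hM
  have hQM : Qᵀ * M = 0 := by
    rw [hM, Matrix.mul_sub, Matrix.mul_one, ← Matrix.mul_assoc, hQ,
      Matrix.one_mul, sub_self]
  have hMQ : Mᵀ = M := by
    rw [hM, Matrix.transpose_sub, Matrix.transpose_one, Matrix.transpose_mul,
      Matrix.transpose_transpose]
  have hgram : (M * X)ᵀ * (M * X) = Xᵀ * X - Pᵀ * P := by
    have hMM : M * M = M := by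
      have h : Q * Qᵀ * (Q * Qᵀ) = Q * Qᵀ := by
        rw [Matrix.mul_assoc, ← Matrix.mul_assoc Qᵀ Q Qᵀ, hQ, Matrix.one_mul]
      rw [hM, Matrix.sub_mul, Matrix.one_mul, Matrix.mul_sub, Matrix.mul_one,
        h, sub_self, sub_zero]
    rw [Matrix.transpose_mul, hMQ, Matrix.mul_assoc, ← Matrix.mul_assoc M M X,
      hMM, ← Matrix.mul_assoc, hP, hM]
    simp [Matrix.mul_sub, Matrix.sub_mul, Matrix.mul_assoc,
      Matrix.transpose_mul, Matrix.transpose_transpose]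
  have hcols : (Matrix.fromCols Q (M * X) : Matrix (Fin n) (Fin k ⊕ Fin s) ℝ) *
      (Matrix.fromBlocks 1 P 0 1 : Matrix (Fin k ⊕ Fin s) (Fin k ⊕ Fin s) ℝ)
      = Matrix.fromCols Q X := by
    have hx : Q * P + M * X = X := by
      rw [hP, hM, Matrix.sub_mul, Matrix.one_mul, ← Matrix.mul_assoc]
      abel
    rw [Matrix.fromCols_mul_fromBlocks, Matrix.mul_one, Matrix.mul_zero,
      add_zero, Matrix.mul_one, hx]
  have hunit : IsUnit (Matrix.fromBlocks (1 : Matrix (Fin k) (Fin k) ℝ) P 0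
      (1 : Matrix (Fin s) (Fin s) ℝ)).det := by
    rw [Matrix.det_fromBlocks_zero₂₁, Matrix.det_one, Matrix.det_one, mul_one]
    exact isUnit_one
  have hrank1 : (Matrix.fromCols Q X).rank = (Matrix.fromCols Q (M * X)).rank := by
    rw [← hcols]
    exact Matrix.rank_mul_eq_left_of_isUnit_det _ _ hunit
  have hrank2 := rank_fromColumns_orthogonal Q (M * X) hQ
    (by rw [← Matrix.mul_assoc, hQM, Matrix.zero_mul])
  rw [← hgram, Matrix.rank_transpose_mul_self, hrank1, hrank2]
  omega
end
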